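/- Let f, V be as in Theorem 4.15 (V convex C¹ Lyapunov function for ẋ = f(x), i.e., positive definite, radially unbounded with ∇V(x)·f(x) < 0 for x ≠ 0), fix r > 0, and define W₁(x) := min{−∇V(y)·f(y) : V(x) ≥ V(y) ≥ V(x)/2} and W₂(x) := V(x)/(2r). If Y = x + h f(Y) with h ∈ (0, r], then V(Y) ≤ V(x) − h·min{W₁(x), W₂(x)}. -/

import Mathlib

open Real RealInnerProductSpace

theorem stmt7 (n : ℕ) (f : EuclideanSpace ℝ (Fin n) → EuclideanSpace ℝ (Fin n))
    (hf : LocallyLipschitz f)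
    (V : EuclideanSpace ℝ (Fin n) → ℝ)
    (hVconv : ConvexOn ℝ Set.univ V) (hVC1 : ContDiff ℝ 1 V)
    (hV0 : V 0 = 0) (hVpos : ∀ x ≠ 0, 0 < V x)
    (hVrad : ∀ M : ℝ, IsCompact {x | V x ≤ M})
    (hLyap : ∀ x ≠ 0, ⟪gradient V x, f x⟫ < 0)
    (r : ℝ) (hr : 0 < r)
    (W₁ : EuclideanSpace ℝ (Fin n) → ℝ)
    (hW₁ : ∀ x, IsLeast
      {w | ∃ y, V y ≤ V x ∧ V x / 2 ≤ V y ∧ w = -⟪gradient V y, f y⟫} (W₁ x))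
    (x Y : EuclideanSpace ℝ (Fin n)) (h : ℝ) (hh : h ∈ Set.Ioc (0:ℝ) r)
    (hY : Y = x + h • f Y) :
    V Y ≤ V x - h * min (W₁ x) (V x / (2 * r)) := by
  obtain ⟨hh0, hhr⟩ := hh
  have hVx0 : 0 ≤ V x := by
    rcases eq_or_ne x 0 with rfl | hx0
    · exact hV0.ge
    · exact (hVpos x hx0).le
  -- convexity gradient inequality: ⟪∇V Y, x - Y⟫ ≤ V x - V Y
  have grad_ineq : ⟪gradient V Y, x - Y⟫ ≤ V x - V Y := by
    have hdV : HasFDerivAt V ((InnerProductSpace.toDual ℝ _) (gradient V Y)) Y :=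
      ((hVC1.differentiable one_ne_zero) Y).hasGradientAt.hasFDerivAt
    have hc : HasDerivAt (fun t : ℝ => Y + t • (x - Y)) (x - Y) 0 := by
      simpa using ((hasDerivAt_id (0:ℝ)).smul_const (x - Y)).const_add Y
    have hg : HasDerivAt (fun t : ℝ => V (Y + t • (x - Y)))
        (⟪gradient V Y, x - Y⟫) 0 := by
      have hdV' : HasFDerivAt V ((InnerProductSpace.toDual ℝ _) (gradient V Y))
          ((fun t : ℝ => Y + t • (x - Y)) 0) := by simpa using hdV
      have := hdV'.comp_hasDerivAt 0 hc
      exact this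
    have hgconv : ConvexOn ℝ Set.univ (fun t : ℝ => V (Y + t • (x - Y))) := by
      have hc2 := hVconv.comp_affineMap (AffineMap.lineMap Y x)
      have : (AffineMap.lineMap Y x : ℝ →ᵃ[ℝ] _) ⁻¹' Set.univ = Set.univ := by simp
      rw [this] at hc2
      have heq : (fun t : ℝ => V (Y + t • (x - Y))) = V ∘ (AffineMap.lineMap Y x) := by
        funext t
        simp only [Function.comp_apply, AffineMap.lineMap_apply]
        congr 1
        simp
        abel
      rw [heq]
      exact hc2
    have hs := hgconv.le_slope_of_hasDerivWithinAt (Set.mem_univ (0:ℝ))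
      (Set.mem_univ (1:ℝ)) one_pos hg.hasDerivWithinAt
    simpa [slope_def_field] using hs
  have hxY : x - Y = -(h • f Y) := by conv_lhs => rw [hY]
                                      abel
  have key : V Y ≤ V x + h * ⟪gradient V Y, f Y⟫ := by
    rw [hxY, inner_neg_right, real_inner_smul_right] at grad_ineq
    linarith
  by_cases hcase : V x / 2 ≤ V Y
  · have hYx : V Y ≤ V x := by
      rcases eq_or_ne Y 0 with rfl | hY0
      · rw [hV0]; exact hVx0
      · nlinarith [hLyap Y hY0]
    have hW := (hW₁ x).2 ⟨Y, hYx, hcase, rfl⟩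
    have hmin : min (W₁ x) (V x / (2 * r)) ≤ W₁ x := min_le_left _ _
    nlinarith
  · push_neg at hcase
    have h1 : h * (V x / (2 * r)) ≤ V x / 2 := by
      rw [mul_div_assoc'] at *
      rw [div_le_div_iff₀ (by positivity) (by norm_num)]
      nlinarith
    have hmin := mul_le_mul_of_nonneg_left
      (min_le_right (W₁ x) (V x / (2 * r))) hh0.le
    linarith
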